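/- Let λ₀(s) denote the smallest eigenvalue of G(s) = L + (s/(1−s))W on the complete graph with V vertices, with W diagonal, W_m = 0 the unique smallest eigenvalue, W positive semidefinite, and second smallest eigenvalue W_{u₁}. Then g(s) := V − λ₀(s) − 1 satisfies dg/ds ≤ −W_{u₁}·(1 − φ(m)²)/(1−s)², where φ is the unit ground state of G(s). In particular, g(s) is strictly decreasing on [0,1). -/

import Mathlib

open Matrix Filter Topology

/-- The smallest eigenvalue of a Hermitian matrix. -/
noncomputable def lamMin {n : ℕ} {A : Matrix (Fin n) (Fin n) ℝ}
    (hA : A.IsHermitian) : ℝ :=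
  ⨅ i, hA.eigenvalues i

/-- The combinatorial Laplacian of the complete graph on `V` vertices:
`L = V·I − J`, where `J` is the all-ones matrix. -/
def cgL (V : ℕ) : Matrix (Fin V) (Fin V) ℝ :=
  (V : ℝ) • (1 : Matrix (Fin V) (Fin V) ℝ) - Matrix.of (fun _ _ => (1 : ℝ))

/-- The rescaled interpolating Hamiltonian `G(s) = L + (s/(1−s))·W`. -/
noncomputable def cgG (V : ℕ) (W : Fin V → ℝ) (s : ℝ) : Matrix (Fin V) (Fin V) ℝ :=
  cgL V + (s / (1 - s)) • Matrix.diagonal W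

/-- The second smallest value of `W`, i.e. the smallest value away from `m`. -/
noncomputable def secondMin {V : ℕ} (hV : 2 ≤ V) (W : Fin V → ℝ) (m : Fin V) : ℝ :=
  (Finset.univ.erase m).inf'
    (by
      rw [Finset.erase_nonempty (Finset.mem_univ m)]
      refine Finset.one_lt_card_iff_nontrivial.mp ?_
      rw [Finset.card_univ, Fintype.card_fin]
      omega) W

/-- For `g(s) = V − λ₀(G(s)) − 1` on the complete graph, with `W`
diagonal positive semidefinite, `W m = 0` its unique smallest eigenvalue, and `φ` the
unit positive ground state of `G(s)`, the derivative satisfies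
`dg/ds ≤ −W_{u₁}(1 − φ(m)²)/(1−s)²`; in particular `g` is strictly decreasing on
`[0,1)`. -/
lemma lamMin_le_eigen {n : ℕ} {A : Matrix (Fin n) (Fin n) ℝ} (hA : A.IsHermitian) (j : Fin n) :
    lamMin hA ≤ hA.eigenvalues j :=
  ciInf_le (Set.Finite.bddBelow (Set.finite_range _)) j

lemma rayleigh_expand {n : ℕ} {A : Matrix (Fin n) (Fin n) ℝ} (hA : A.IsHermitian)
    (x : Fin n → ℝ) :
    ∃ y : Fin n → ℝ, x ⬝ᵥ A.mulVec x = ∑ j, hA.eigenvalues j * y j ^ 2 ∧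
      ∑ j, y j ^ 2 = ∑ u, x u ^ 2 := by
  classical
  set U : Matrix (Fin n) (Fin n) ℝ := (hA.eigenvectorUnitary : Matrix (Fin n) (Fin n) ℝ) with hU
  have hUU : U * star U = 1 := (Matrix.mem_unitaryGroup_iff).mp hA.eigenvectorUnitary.2
  set y : Fin n → ℝ := (star U) *ᵥ x with hy
  have hmove : ∀ z : Fin n → ℝ, x ⬝ᵥ (U *ᵥ z) = y ⬝ᵥ z := by
    intro z
    rw [dotProduct_mulVec, hy]
    congr 1
    rw [star_eq_conjTranspose, conjTranspose_eq_transpose_of_trivial, ← vecMul_transpose,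
      transpose_transpose]
  have hspec : A = U * diagonal hA.eigenvalues * star U := by
    have := hA.spectral_theorem
    simpa using this
  refine ⟨y, ?_, ?_⟩
  · calc x ⬝ᵥ A.mulVec x = x ⬝ᵥ (U *ᵥ (diagonal hA.eigenvalues *ᵥ y)) := by
          conv_lhs => rw [hspec]
          rw [hy, ← mulVec_mulVec, ← mulVec_mulVec]
    _ = y ⬝ᵥ (diagonal hA.eigenvalues *ᵥ y) := hmove _
    _ = ∑ j, hA.eigenvalues j * y j ^ 2 := by
          simp only [dotProduct, mulVec_diagonal]
          exact Finset.sum_congr rfl fun j _ => by ring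
  · have h1 : ∑ j, y j ^ 2 = y ⬝ᵥ y := by simp [dotProduct, pow_two]
    have h2 : U *ᵥ y = x := by rw [hy, mulVec_mulVec, hUU, one_mulVec]
    rw [h1, ← hmove y, h2]
    simp [dotProduct, pow_two]

lemma lamMin_le_rayleigh {n : ℕ} {A : Matrix (Fin n) (Fin n) ℝ} (hA : A.IsHermitian)
    (x : Fin n → ℝ) (hx : ∑ u, x u ^ 2 = 1) :
    lamMin hA ≤ x ⬝ᵥ A.mulVec x := by
  obtain ⟨y, hxy, hny⟩ := rayleigh_expand hA x
  rw [hxy]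
  have : ∀ j ∈ Finset.univ, lamMin hA * y j ^ 2 ≤ hA.eigenvalues j * y j ^ 2 :=
    fun j _ => mul_le_mul_of_nonneg_right (lamMin_le_eigen hA j) (sq_nonneg _)
  calc lamMin hA = ∑ j, lamMin hA * y j ^ 2 := by
        rw [← Finset.mul_sum, hny.trans hx, mul_one]
  _ ≤ _ := Finset.sum_le_sum this

lemma exists_unit_eigenvector {n : ℕ} [NeZero n] {A : Matrix (Fin n) (Fin n) ℝ}
    (hA : A.IsHermitian) :
    ∃ x : Fin n → ℝ, (∑ u, x u ^ 2 = 1) ∧ A.mulVec x = lamMin hA • x := by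
  obtain ⟨i, -, hi⟩ := Finset.exists_min_image Finset.univ hA.eigenvalues
    ⟨⟨0, Nat.pos_of_ne_zero (NeZero.ne n)⟩, Finset.mem_univ _⟩
  have hmin : lamMin hA = hA.eigenvalues i :=
    le_antisymm (ciInf_le (Set.Finite.bddBelow (Set.finite_range _)) i)
      (le_ciInf fun j => hi j (Finset.mem_univ _))
  refine ⟨⇑(hA.eigenvectorBasis i), ?_, ?_⟩
  · have hnorm : ‖hA.eigenvectorBasis i‖ = 1 := hA.eigenvectorBasis.orthonormal.1 i
    have h2 : (inner (𝕜 := ℝ) (hA.eigenvectorBasis i) (hA.eigenvectorBasis i)) = 1 := by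
      rw [real_inner_self_eq_norm_sq, hnorm]; norm_num
    rw [← h2]
    simp [PiLp.inner_apply, RCLike.inner_apply, pow_two]
    rw [← h2, PiLp.inner_apply]
    simp only [RCLike.inner_apply, conj_trivial, mul_comm]
  · rw [hmin]
    exact hA.mulVec_eigenvectorBasis i


noncomputable def cgM (V : ℕ) (W : Fin V → ℝ) (c : ℝ) : Matrix (Fin V) (Fin V) ℝ :=
  cgL V + c • Matrix.diagonal W

lemma cgM_isHermitian (V : ℕ) (W : Fin V → ℝ) (c : ℝ) : (cgM V W c).IsHermitian := by
  ext i j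
  by_cases h : i = j <;>
    simp [cgM, cgL, Matrix.conjTranspose_apply, Matrix.diagonal_apply, Matrix.one_apply, h,
      eq_comm]

noncomputable def lamM (V : ℕ) (W : Fin V → ℝ) (c : ℝ) : ℝ := lamMin (cgM_isHermitian V W c)

lemma cgM_mulVec (V : ℕ) (W : Fin V → ℝ) (c : ℝ) (x : Fin V → ℝ) (u : Fin V) :
    (cgM V W c).mulVec x u = (V:ℝ) * x u - (∑ v, x v) + c * (W u * x u) := by
  simp only [cgM, cgL, Matrix.add_mulVec, Matrix.sub_mulVec, Matrix.smul_mulVec,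
    Matrix.mulVec, dotProduct, Matrix.smul_apply, Matrix.sub_apply, Matrix.add_apply,
    Matrix.one_apply, Matrix.of_apply, smul_eq_mul, Pi.smul_apply]
  have h1 : ∀ v : Fin V, (((V:ℝ) * if u = v then 1 else 0) - 1 + c * Matrix.diagonal W u v) * x v
      = (if u = v then (V:ℝ) * x v + c * (W u * x v) else 0) - x v := by
    intro v
    by_cases h : u = v <;> simp [Matrix.diagonal_apply, h] <;> ring
  rw [Finset.sum_congr rfl fun v _ => h1 v, Finset.sum_sub_distrib, Finset.sum_ite_eq]
  simp
  ring

lemma cgM_rayleigh (V : ℕ) (W : Fin V → ℝ) (c : ℝ) (x : Fin V → ℝ) :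
    x ⬝ᵥ (cgM V W c).mulVec x =
      (V:ℝ) * (∑ u, x u ^ 2) - (∑ u, x u) ^ 2 + c * ∑ u, W u * x u ^ 2 := by
  simp only [dotProduct, cgM_mulVec]
  have : ∀ u : Fin V, x u * ((V:ℝ) * x u - (∑ v, x v) + c * (W u * x u))
      = (V:ℝ) * x u ^ 2 - (∑ v, x v) * x u + c * (W u * x u ^ 2) := fun u => by ring
  rw [Finset.sum_congr rfl fun u _ => this u]
  rw [Finset.sum_add_distrib, Finset.sum_sub_distrib, ← Finset.mul_sum, ← Finset.mul_sum,
    ← Finset.mul_sum]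
  ring

lemma eig_component {V : ℕ} {W : Fin V → ℝ} {c l : ℝ} {x : Fin V → ℝ}
    (hx : (cgM V W c).mulVec x = l • x) (u : Fin V) :
    x u * ((V:ℝ) + (W u * c - l)) = ∑ v, x v := by
  have h := congrFun hx u
  rw [cgM_mulVec] at h
  simp only [Pi.smul_apply, smul_eq_mul] at h
  linear_combination h

lemma single_sq_sum {V : ℕ} (m : Fin V) (f : Fin V → ℝ) :
    ∑ u, f u * (Pi.single m 1 : Fin V → ℝ) u ^ 2 = f m := by
  have h : ∀ u : Fin V, f u * (Pi.single m 1 : Fin V → ℝ) u ^ 2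
      = if u = m then f u else 0 := by
    intro u
    by_cases h : u = m
    · subst h; simp
    · simp [h]
  rw [Finset.sum_congr rfl fun u _ => h u, Finset.sum_ite_eq']
  simp

lemma single_sum {V : ℕ} (m : Fin V) :
    ∑ u, (Pi.single m 1 : Fin V → ℝ) u = 1 := by
  simp

lemma single_sq_sum' {V : ℕ} (m : Fin V) :
    ∑ u, (Pi.single m 1 : Fin V → ℝ) u ^ 2 = 1 := by
  have := single_sq_sum m (fun _ => (1:ℝ))
  simpa using this

lemma lamM_le {V : ℕ} (hV : 2 ≤ V) {W : Fin V → ℝ} {m : Fin V} (hWm : W m = 0) (c : ℝ) :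
    lamM V W c ≤ (V:ℝ) - 1 := by
  have h := lamMin_le_rayleigh (cgM_isHermitian V W c) (Pi.single m 1) (single_sq_sum' m)
  rw [cgM_rayleigh, single_sq_sum' m, single_sum m, single_sq_sum m W, hWm] at h
  have : lamM V W c = lamMin (cgM_isHermitian V W c) := rfl
  rw [this]
  linarith [h]

lemma secular {V : ℕ} (hV : 2 ≤ V) {W : Fin V → ℝ} {m : Fin V} (hWm : W m = 0)
    {c : ℝ} (hQ : ∀ u, -(1/2:ℝ) ≤ c * W u) :
    (∀ u, (1/2:ℝ) ≤ (V:ℝ) + (W u * c - lamM V W c)) ∧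
      ∑ u, ((V:ℝ) + (W u * c - lamM V W c))⁻¹ = 1 := by
  have hnz : NeZero V := ⟨by omega⟩
  have hle := lamM_le hV hWm c
  have hden : ∀ u, (1/2:ℝ) ≤ (V:ℝ) + (W u * c - lamM V W c) := by
    intro u; have := hQ u; nlinarith
  refine ⟨hden, ?_⟩
  obtain ⟨x, hxn, hxe⟩ := exists_unit_eigenvector (cgM_isHermitian V W c)
  have hlam : lamMin (cgM_isHermitian V W c) = lamM V W c := rfl
  rw [hlam] at hxe
  set l := lamM V W c with hl
  set S := ∑ v, x v with hS
  have hcomp : ∀ u, x u * ((V:ℝ) + (W u * c - l)) = S := fun u => eig_component hxe u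
  have hSne : S ≠ 0 := by
    intro h0
    have hx0 : ∀ u, x u = 0 := by
      intro u
      have h2 := hcomp u; rw [h0] at h2
      rcases mul_eq_zero.mp h2 with h | h
      · exact h
      · exact absurd h (by have := hden u; intro hh; rw [hh] at this; norm_num at this)
    rw [Finset.sum_congr rfl fun u _ => by rw [hx0 u]] at hxn
    norm_num at hxn
  have hinv : ∀ u, ((V:ℝ) + (W u * c - l))⁻¹ = x u / S := by
    intro u
    have hd : ((V:ℝ) + (W u * c - l)) ≠ 0 := by have := hden u; intro hh; rw [hh] at this; norm_num at this
    rw [eq_div_iff hSne, ← hcomp u]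
    field_simp
  rw [Finset.sum_congr rfl fun u _ => hinv u, ← Finset.sum_div, ← hS, div_self hSne]

lemma H_mono {V : ℕ} (hV : 2 ≤ V) (W : Fin V → ℝ) (c l₁ l₂ : ℝ) (h12 : l₁ < l₂)
    (hpos : ∀ u, 0 < (V:ℝ) + (W u * c - l₂)) :
    ∑ u, ((V:ℝ) + (W u * c - l₁))⁻¹ < ∑ u, ((V:ℝ) + (W u * c - l₂))⁻¹ := by
  have : Nonempty (Fin V) := ⟨⟨0, by omega⟩⟩
  refine Finset.sum_lt_sum_of_nonempty Finset.univ_nonempty fun u _ => ?_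
  have h2 := hpos u
  exact inv_strictAnti₀ h2 (by linarith)

lemma lamM_strictMono {V : ℕ} (hV : 2 ≤ V) {W : Fin V → ℝ} {m : Fin V} (hWm : W m = 0)
    (hmin : ∀ u, u ≠ m → 0 < W u) {c c' : ℝ} (hcc : c < c') :
    lamM V W c < lamM V W c' := by
  have hnz : NeZero V := ⟨by omega⟩
  obtain ⟨x, hxn, hxe⟩ := exists_unit_eigenvector (cgM_isHermitian V W c')
  have hlam : lamMin (cgM_isHermitian V W c') = lamM V W c' := rfl
  rw [hlam] at hxe
  set S := ∑ v, x v with hS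
  have hcomp : ∀ u, x u * ((V:ℝ) + (W u * c' - lamM V W c')) = S :=
    fun u => eig_component hxe u
  have hray' : x ⬝ᵥ (cgM V W c').mulVec x = lamM V W c' := by
    rw [hxe]
    have : ∀ u : Fin V, x u * (lamM V W c' • x) u = lamM V W c' * x u ^ 2 := by
      intro u; simp [Pi.smul_apply, smul_eq_mul]; ring
    rw [show x ⬝ᵥ (lamM V W c' • x) = ∑ u, x u * (lamM V W c' • x) u from rfl,
      Finset.sum_congr rfl fun u _ => this u, ← Finset.mul_sum, hxn, mul_one]
  have hbnn : ∀ u ∈ Finset.univ, 0 ≤ W u * x u ^ 2 := by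
    intro u _
    rcases eq_or_ne u m with h | h
    · rw [h, hWm]; simp
    · exact mul_nonneg (hmin u h).le (sq_nonneg _)
  have hb : 0 < ∑ u, W u * x u ^ 2 := by
    rcases (Finset.sum_nonneg hbnn).eq_or_lt.imp_left Eq.symm with h0 | h
    · exfalso
      have hz := (Finset.sum_eq_zero_iff_of_nonneg hbnn).mp h0
      have hxu : ∀ u, u ≠ m → x u = 0 := by
        intro u hu
        have := hz u (Finset.mem_univ u)
        rcases mul_eq_zero.mp this with h | h
        · exact absurd h (hmin u hu).ne'
        · exact pow_eq_zero_iff (n := 2) (by norm_num) |>.mp h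
      obtain ⟨u₀, hu₀⟩ := Fintype.exists_ne_of_one_lt_card (by simp; omega) m
      have hS0 : S = 0 := by
        have := hcomp u₀; rw [hxu u₀ hu₀] at this; simpa using this.symm
      have hxm : x m = 0 := by
        have h2 := hcomp m
        rw [hWm, hS0] at h2
        simp only [zero_mul, zero_sub] at h2
        rcases mul_eq_zero.mp h2 with h | h
        · exact h
        · exfalso
          have hlle := lamM_le hV hWm c'
          have hVl : (V:ℝ) + -lamM V W c' = 0 := by linear_combination h
          linarith
      have hx0 : ∀ u, x u = 0 := by
        intro u; rcases eq_or_ne u m with h | h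
        · rw [h]; exact hxm
        · exact hxu u h
      rw [Finset.sum_congr rfl fun u _ => by rw [hx0 u]] at hxn
      norm_num at hxn
    · exact h
  have hray : x ⬝ᵥ (cgM V W c).mulVec x
      = lamM V W c' + (c - c') * ∑ u, W u * x u ^ 2 := by
    rw [cgM_rayleigh, ← hray', cgM_rayleigh]
    ring
  have hle : lamM V W c ≤ x ⬝ᵥ (cgM V W c).mulVec x :=
    lamMin_le_rayleigh (cgM_isHermitian V W c) x hxn
  rw [hray] at hle
  nlinarith

lemma H_mono_le {V : ℕ} (W : Fin V → ℝ) (c l₁ l₂ : ℝ) (h12 : l₁ ≤ l₂)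
    (hpos : ∀ u, 0 < (V:ℝ) + (W u * c - l₂)) :
    ∑ u, ((V:ℝ) + (W u * c - l₁))⁻¹ ≤ ∑ u, ((V:ℝ) + (W u * c - l₂))⁻¹ := by
  refine Finset.sum_le_sum fun u _ => ?_
  have h2 := hpos u
  exact inv_anti₀ h2 (by linarith)

-- continuity helper: c ↦ ∑ u (V + (W u c − l))⁻¹ has a derivative (hence continuous) at c₀
lemma H_slice_hasDerivAt {V : ℕ} (W : Fin V → ℝ) (l c₀ : ℝ)
    (hl : ∀ u, (V:ℝ) + (W u * c₀ - l) ≠ 0) :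
    HasDerivAt (fun c => ∑ u, ((V:ℝ) + (W u * c - l))⁻¹)
      (∑ u, -W u / ((V:ℝ) + (W u * c₀ - l)) ^ 2) c₀ := by
  apply HasDerivAt.fun_sum
  intro u _
  have h1 : HasDerivAt (fun c : ℝ => (V:ℝ) + (W u * c - l)) (W u) c₀ := by
    simpa using (((hasDerivAt_id c₀).const_mul (W u)).sub_const l).const_add (V:ℝ)
  exact h1.inv (hl u)

lemma lamM_tendsto {V : ℕ} (hV : 2 ≤ V) {W : Fin V → ℝ} {m : Fin V}
    (hWm : W m = 0) (hmin : ∀ u, u ≠ m → 0 < W u) {c₀ : ℝ} (hc₀ : 0 ≤ c₀)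
    (hQev : ∀ᶠ c in 𝓝 c₀, ∀ u, -(1/2:ℝ) ≤ c * W u)
    (hWb : ∀ᶠ c in 𝓝 c₀, ∀ u, -(1/8:ℝ) ≤ W u * (c - c₀)) :
    Filter.Tendsto (lamM V W) (𝓝 c₀) (𝓝 (lamM V W c₀)) := by
  have hQ₀ : ∀ u, -(1/2:ℝ) ≤ c₀ * W u := by
    intro u
    rcases eq_or_ne u m with h | h
    · rw [h, hWm]; norm_num
    · have := mul_nonneg hc₀ (hmin u h).le; linarith
  obtain ⟨hd₀, hsec₀⟩ := secular hV hWm hQ₀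
  set p := lamM V W c₀ with hp
  rw [Metric.tendsto_nhds]
  intro ε hε
  set ε' := min ε (1/4 : ℝ) with hε'def
  have hε'pos : 0 < ε' := lt_min hε (by norm_num)
  have hε'le : ε' ≤ 1/4 := min_le_right _ _
  have hlow : ∑ u, ((V:ℝ) + (W u * c₀ - (p - ε')))⁻¹ < 1 := by
    rw [← hsec₀]
    exact H_mono hV W c₀ (p - ε') p (by linarith) (fun u => by have := hd₀ u; linarith)
  have hhigh : 1 < ∑ u, ((V:ℝ) + (W u * c₀ - (p + ε')))⁻¹ := by
    rw [← hsec₀]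
    exact H_mono hV W c₀ p (p + ε') (by linarith) (fun u => by have := hd₀ u; linarith)
  have hc1 : HasDerivAt (fun c => ∑ u, ((V:ℝ) + (W u * c - (p - ε')))⁻¹) _ c₀ :=
    H_slice_hasDerivAt W (p - ε') c₀ (fun u => by have := hd₀ u; intro hh; nlinarith)
  have hc2 : HasDerivAt (fun c => ∑ u, ((V:ℝ) + (W u * c - (p + ε')))⁻¹) _ c₀ :=
    H_slice_hasDerivAt W (p + ε') c₀
      (fun u => by have := hd₀ u; intro hh; nlinarith)
  have ev1 : ∀ᶠ c in 𝓝 c₀, ∑ u, ((V:ℝ) + (W u * c - (p - ε')))⁻¹ < 1 :=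
    hc1.continuousAt.tendsto.eventually_lt_const hlow
  have ev2 : ∀ᶠ c in 𝓝 c₀, 1 < ∑ u, ((V:ℝ) + (W u * c - (p + ε')))⁻¹ :=
    hc2.continuousAt.tendsto.eventually_const_lt hhigh
  filter_upwards [ev1, ev2, hQev, hWb] with c h1 h2 hQ hW8
  obtain ⟨hdc, hsecc⟩ := secular hV hWm hQ
  set l := lamM V W c with hl
  have hub : l < p + ε' := by
    by_contra hcon
    push_neg at hcon
    have := H_mono_le W c (p + ε') l hcon (fun u => by have := hdc u; linarith)
    rw [hsecc] at this
    linarith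
  have hlb : p - ε' < l := by
    by_contra hcon
    push_neg at hcon
    have hposm : ∀ u, 0 < (V:ℝ) + (W u * c - (p - ε')) := by
      intro u
      have ha := hdc u
      have hb := hW8 u
      -- V + Wu c − (p−ε') = (V + Wu c₀ − p) + ε' + Wu (c−c₀); first ≥ 1/2 at c₀... 
      have hd0 := hd₀ u
      nlinarith
    have := H_mono_le W c l (p - ε') hcon hposm
    rw [hsecc] at this
    linarith
  rw [Real.dist_eq, abs_lt]
  constructor <;> nlinarith [min_le_left ε (1/4:ℝ)]

lemma Wnonneg {V : ℕ} {W : Fin V → ℝ} {m : Fin V} (hWm : W m = 0)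
    (hmin : ∀ u, u ≠ m → 0 < W u) : ∀ u, 0 ≤ W u := by
  intro u
  rcases eq_or_ne u m with h | h
  · rw [h, hWm]
  · exact (hmin u h).le

lemma eventually_bound {V : ℕ} {W : Fin V → ℝ} {m : Fin V} (hWm : W m = 0)
    (hmin : ∀ u, u ≠ m → 0 < W u) (c₀ a : ℝ) (ha : 0 < a) :
    ∀ᶠ c in 𝓝 c₀, ∀ u, -a ≤ W u * (c - c₀) := by
  have Wnn := Wnonneg hWm hmin
  set Wmx := Finset.univ.sup' ⟨m, Finset.mem_univ m⟩ W with hWmx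
  have hle : ∀ u, W u ≤ Wmx := fun u => Finset.le_sup' W (Finset.mem_univ u)
  have hWmx0 : 0 ≤ Wmx := hWm ▸ hle m
  have hball : Metric.ball c₀ (a / (Wmx + 1)) ∈ 𝓝 c₀ :=
    Metric.ball_mem_nhds _ (by positivity)
  filter_upwards [hball] with c hc u
  have hcd : |c - c₀| < a / (Wmx + 1) := by simpa [Real.dist_eq] using hc
  have h1 := abs_lt.mp hcd
  have h2 : a / (Wmx + 1) * (Wmx + 1) = a := by field_simp
  have hrpos : 0 < a / (Wmx + 1) := div_pos ha (by linarith)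
  have h3 : W u * (-(a / (Wmx + 1))) ≤ W u * (c - c₀) :=
    mul_le_mul_of_nonneg_left h1.1.le (Wnn u)
  have h4 : W u * (a / (Wmx + 1)) ≤ Wmx * (a / (Wmx + 1)) :=
    mul_le_mul_of_nonneg_right (hle u) hrpos.le
  nlinarith

lemma eventually_Q {V : ℕ} {W : Fin V → ℝ} {m : Fin V} (hWm : W m = 0)
    (hmin : ∀ u, u ≠ m → 0 < W u) {c₀ : ℝ} (hc₀ : 0 ≤ c₀) :
    ∀ᶠ c in 𝓝 c₀, ∀ u, -(1/2:ℝ) ≤ c * W u := by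
  have Wnn := Wnonneg hWm hmin
  filter_upwards [eventually_bound hWm hmin c₀ (1/2) (by norm_num)] with c hc u
  have := hc u
  have := mul_nonneg hc₀ (Wnn u)
  nlinarith

lemma hasDerivAt_lamM {V : ℕ} (hV : 2 ≤ V) {W : Fin V → ℝ} {m : Fin V}
    (hWm : W m = 0) (hmin : ∀ u, u ≠ m → 0 < W u) {c₀ : ℝ} (hc₀ : 0 ≤ c₀) :
    HasDerivAt (lamM V W)
      ((∑ u, W u * (((V:ℝ) + (W u * c₀ - lamM V W c₀)) ^ 2)⁻¹) /
        (∑ u, (((V:ℝ) + (W u * c₀ - lamM V W c₀)) ^ 2)⁻¹)) c₀ := by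
  have hne : Nonempty (Fin V) := ⟨m⟩
  have Wnn := Wnonneg hWm hmin
  have hQ₀ : ∀ u, -(1/2:ℝ) ≤ c₀ * W u := fun u => by
    have := mul_nonneg hc₀ (Wnn u); linarith
  obtain ⟨hd₀, hsec₀⟩ := secular hV hWm hQ₀
  set p := lamM V W c₀ with hp
  set d : Fin V → ℝ := fun u => (V:ℝ) + (W u * c₀ - p) with hd
  have hd0 : ∀ u, d u ≠ 0 := fun u => by have := hd₀ u; positivity
  set A : ℝ := ∑ u, W u * (d u ^ 2)⁻¹ with hA
  set B : ℝ := ∑ u, (d u ^ 2)⁻¹ with hB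
  have hBpos : 0 < B := Finset.sum_pos (fun u _ => by
    have := hd₀ u; positivity) Finset.univ_nonempty
  set z₀ : ℝ × ℝ := (c₀, p) with hz₀
  set H : ℝ × ℝ → ℝ := fun z => ∑ u, ((V:ℝ) + (W u * z.1 - z.2))⁻¹ with hH
  -- derivative of H
  have hterm : ∀ u : Fin V, HasFDerivAt (fun z : ℝ × ℝ => (V:ℝ) + (W u * z.1 - z.2))
      ((W u • ContinuousLinearMap.fst ℝ ℝ ℝ) - ContinuousLinearMap.snd ℝ ℝ ℝ) z₀ := by
    intro u
    have h1 : HasFDerivAt (fun z : ℝ × ℝ => W u * z.1)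
        (W u • ContinuousLinearMap.fst ℝ ℝ ℝ) z₀ := (hasFDerivAt_fst.const_mul (W u))
    exact (h1.sub hasFDerivAt_snd).const_add (V:ℝ)
  have hHfd : HasFDerivAt H
      (∑ u, (-((((V:ℝ) + (W u * c₀ - p)) ^ 2)⁻¹)) •
        ((W u • ContinuousLinearMap.fst ℝ ℝ ℝ) - ContinuousLinearMap.snd ℝ ℝ ℝ)) z₀ := by
    apply HasFDerivAt.fun_sum
    intro u _
    have hinv0 : ((V:ℝ) + (W u * c₀ - p)) ≠ 0 := by simpa using hd0 u
    exact (hasDerivAt_inv hinv0).comp_hasFDerivAt z₀ (hterm u)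
  have hHcd : ContDiffAt ℝ 1 H z₀ := by
    apply ContDiffAt.sum
    intro u _
    have hden : ContDiff ℝ 1 (fun z : ℝ × ℝ => (V:ℝ) + (W u * z.1 - z.2)) := by fun_prop
    exact hden.contDiffAt.inv (by simpa using hd0 u)
  -- the map Ψ
  set Ψ : ℝ × ℝ → ℝ × ℝ := fun z => (z.1, H z) with hΨ
  have hΨcd : ContDiffAt ℝ 1 Ψ z₀ := contDiffAt_fst.prodMk hHcd
  -- the equiv
  have hB' : B ≠ 0 := hBpos.ne'
  set Elin : (ℝ × ℝ) ≃ₗ[ℝ] (ℝ × ℝ) :=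
    { toFun := fun z => (z.1, -A * z.1 + B * z.2)
      invFun := fun z => (z.1, (z.2 + A * z.1) / B)
      map_add' := by
        intro a b
        refine Prod.ext (by simp) ?_
        show -A * (a.1 + b.1) + B * (a.2 + b.2) = _
        simp only [Prod.snd_add]
        show _ = -A * a.1 + B * a.2 + (-A * b.1 + B * b.2)
        ring
      map_smul' := by
        intro r a
        refine Prod.ext (by simp) ?_
        show -A * (r • a).1 + B * (r • a).2 = (r • ((-A * a.1 + B * a.2) : ℝ))
        simp only [Prod.smul_fst, Prod.smul_snd, smul_eq_mul]
        ring
      left_inv := by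
        intro z
        refine Prod.ext rfl ?_
        show (-A * z.1 + B * z.2 + A * z.1) / B = z.2
        field_simp
        ring
      right_inv := by
        intro z
        refine Prod.ext rfl ?_
        show -A * z.1 + B * ((z.2 + A * z.1) / B) = z.2
        field_simp
        ring } with hElin
  set E : (ℝ × ℝ) ≃L[ℝ] (ℝ × ℝ) := Elin.toContinuousLinearEquiv with hE
  have hEapp : ∀ z : ℝ × ℝ, E z = (z.1, -A * z.1 + B * z.2) := fun z => rfl
  have hEcoe : (E : (ℝ × ℝ) →L[ℝ] (ℝ × ℝ)) =
      (ContinuousLinearMap.fst ℝ ℝ ℝ).prod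
        (∑ u, (-((((V:ℝ) + (W u * c₀ - p)) ^ 2)⁻¹)) •
          ((W u • ContinuousLinearMap.fst ℝ ℝ ℝ) - ContinuousLinearMap.snd ℝ ℝ ℝ)) := by
    apply ContinuousLinearMap.ext
    intro z
    refine Prod.ext rfl ?_
    show -A * z.1 + B * z.2 = _
    simp only [ContinuousLinearMap.prod_apply, ContinuousLinearMap.sum_apply,
      ContinuousLinearMap.smul_apply, ContinuousLinearMap.sub_apply,
      ContinuousLinearMap.coe_fst', ContinuousLinearMap.coe_snd', smul_eq_mul]
    rw [hA, hB]
    rw [Finset.sum_congr rfl (fun u _ => show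
      -((((V:ℝ) + (W u * c₀ - p)) ^ 2)⁻¹) * (W u * z.1 - z.2)
        = -(W u * (d u ^ 2)⁻¹) * z.1 + (d u ^ 2)⁻¹ * z.2 from by rw [hd]; ring)]
    rw [Finset.sum_add_distrib, ← Finset.sum_mul, ← Finset.sum_mul, Finset.sum_neg_distrib]
  have hΨfd : HasFDerivAt Ψ (E : (ℝ × ℝ) →L[ℝ] (ℝ × ℝ)) z₀ := by
    rw [hEcoe]
    exact hasFDerivAt_fst.prodMk hHfd
  have hstrict : HasStrictFDerivAt Ψ (E : (ℝ × ℝ) →L[ℝ] (ℝ × ℝ)) z₀ :=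
    hΨcd.hasStrictFDerivAt' hΨfd one_ne_zero
  -- local inverse
  have hΨz₀ : Ψ z₀ = (c₀, 1) := by
    refine Prod.ext rfl ?_
    show H z₀ = 1
    exact hsec₀
  have hinv : HasStrictFDerivAt (hstrict.localInverse Ψ E z₀)
      (E.symm : (ℝ × ℝ) →L[ℝ] (ℝ × ℝ)) (c₀, 1) := by
    rw [← hΨz₀]
    exact hstrict.to_localInverse
  have hline : HasDerivAt (fun c : ℝ => ((c, (1:ℝ)) : ℝ × ℝ)) ((1:ℝ), (0:ℝ)) c₀ :=
    (hasDerivAt_id c₀).prodMk (hasDerivAt_const c₀ 1)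
  have hcomp1 : HasDerivAt (fun c : ℝ => hstrict.localInverse Ψ E z₀ (c, 1))
      ((E.symm : (ℝ × ℝ) →L[ℝ] (ℝ × ℝ)) (1, 0)) c₀ :=
    hinv.hasFDerivAt.comp_hasDerivAt c₀ hline
  have hcomp2 : HasDerivAt (fun c : ℝ => (hstrict.localInverse Ψ E z₀ (c, 1)).2)
      (((E.symm : (ℝ × ℝ) →L[ℝ] (ℝ × ℝ)) ((1:ℝ), (0:ℝ))).2) c₀ :=
    (ContinuousLinearMap.snd ℝ ℝ ℝ).hasFDerivAt.comp_hasDerivAt c₀ hcomp1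
  -- eventual equality
  have hQev := eventually_Q hWm hmin hc₀
  have hWb := eventually_bound hWm hmin c₀ (1/8) (by norm_num)
  have htend : Filter.Tendsto (fun c => ((c, lamM V W c) : ℝ × ℝ)) (𝓝 c₀) (𝓝 z₀) := by
    rw [hz₀]
    exact Filter.Tendsto.prodMk_nhds tendsto_id (lamM_tendsto hV hWm hmin hc₀ hQev hWb)
  have hev : ∀ᶠ c in 𝓝 c₀, lamM V W c = (hstrict.localInverse Ψ E z₀ (c, 1)).2 := by
    filter_upwards [htend.eventually hstrict.eventually_left_inverse, hQev] with c hS hQ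
    have hsecc := (secular hV hWm hQ).2
    have hΨc : Ψ (c, lamM V W c) = (c, 1) := by
      refine Prod.ext rfl ?_
      show H (c, lamM V W c) = 1
      exact hsecc
    rw [← hΨc, hS]
  have hfinal : HasDerivAt (lamM V W)
      (((E.symm : (ℝ × ℝ) →L[ℝ] (ℝ × ℝ)) ((1:ℝ), (0:ℝ))).2) c₀ :=
    hcomp2.congr_of_eventuallyEq hev
  have hval : ((E.symm : (ℝ × ℝ) →L[ℝ] (ℝ × ℝ)) ((1:ℝ), (0:ℝ))).2 = A / B := by
    have : E.symm ((1:ℝ), (0:ℝ)) = ((1:ℝ), ((0:ℝ) + A * 1) / B) := rfl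
    rw [show ((E.symm : (ℝ × ℝ) →L[ℝ] (ℝ × ℝ)) ((1:ℝ), (0:ℝ))) = E.symm ((1:ℝ), (0:ℝ)) from rfl,
      this]
    norm_num
  rw [hval] at hfinal
  exact hfinal

theorem g_derivative_bound {V : ℕ} (hV : 2 ≤ V) (W : Fin V → ℝ) (m : Fin V)
    (hWm : W m = 0) (hmin : ∀ u : Fin V, u ≠ m → 0 < W u)
    (hG : ∀ t : ℝ, (cgG V W t).IsHermitian)
    (s : ℝ) (hs : s ∈ Set.Ico (0 : ℝ) 1)
    (φ : Fin V → ℝ) (hpos : ∀ u, 0 < φ u) (hnorm : ∑ u : Fin V, (φ u) ^ 2 = 1)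
    (hEig : (cgG V W s).mulVec φ = lamMin (hG s) • φ) :
    (∃ d : ℝ, HasDerivAt (fun t : ℝ => (V : ℝ) - lamMin (hG t) - 1) d s ∧
        d ≤ -(secondMin hV W m) * (1 - (φ m) ^ 2) / (1 - s) ^ 2) ∧
      StrictAntiOn (fun t : ℝ => (V : ℝ) - lamMin (hG t) - 1) (Set.Ico (0 : ℝ) 1) := by
  obtain ⟨hs0, hs1⟩ := hs
  have h1s : (0:ℝ) < 1 - s := by linarith
  have hne : Nonempty (Fin V) := ⟨m⟩
  set c₀ : ℝ := s / (1 - s) with hc₀def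
  have hc₀ : 0 ≤ c₀ := div_nonneg hs0 h1s.le
  have hD := hasDerivAt_lamM hV hWm hmin hc₀
  have hEig' : (cgM V W c₀).mulVec φ = lamM V W c₀ • φ := hEig
  set p := lamM V W c₀ with hp
  have hcomp : ∀ u, φ u * ((V:ℝ) + (W u * c₀ - p)) = ∑ v, φ v :=
    fun u => eig_component hEig' u
  set K := ∑ v, φ v with hK
  have hKpos : 0 < K := Finset.sum_pos (fun u _ => hpos u) Finset.univ_nonempty
  have hdpos : ∀ u, 0 < (V:ℝ) + (W u * c₀ - p) := by
    intro u
    by_contra h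
    push_neg at h
    nlinarith [hcomp u, hpos u, mul_nonpos_of_nonneg_of_nonpos (hpos u).le h]
  have hinv2 : ∀ u, ((((V:ℝ) + (W u * c₀ - p)) ^ 2)⁻¹) = φ u ^ 2 * (K ^ 2)⁻¹ := by
    intro u
    have h2 : K ^ 2 = φ u ^ 2 * ((V:ℝ) + (W u * c₀ - p)) ^ 2 := by
      linear_combination (-(φ u * ((V:ℝ) + (W u * c₀ - p)) + K)) * hcomp u
    rw [h2, mul_inv, ← mul_assoc, mul_inv_cancel₀ (pow_ne_zero 2 (hpos u).ne'), one_mul]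
  have hAval : (∑ u, W u * (((V:ℝ) + (W u * c₀ - p)) ^ 2)⁻¹)
      = (∑ u, W u * φ u ^ 2) * (K ^ 2)⁻¹ := by
    rw [Finset.sum_congr rfl (fun u _ => show
      W u * (((V:ℝ) + (W u * c₀ - p)) ^ 2)⁻¹ = (W u * φ u ^ 2) * (K ^ 2)⁻¹ from by
        rw [hinv2 u]; ring), ← Finset.sum_mul]
  have hBval : (∑ u, (((V:ℝ) + (W u * c₀ - p)) ^ 2)⁻¹) = (K ^ 2)⁻¹ := by
    rw [Finset.sum_congr rfl (fun u _ => hinv2 u), ← Finset.sum_mul, hnorm, one_mul]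
  rw [hAval, hBval] at hD
  have hsimp : ((∑ u, W u * φ u ^ 2) * (K ^ 2)⁻¹) / (K ^ 2)⁻¹ = ∑ u, W u * φ u ^ 2 := by
    field_simp
  rw [hsimp] at hD
  -- chain rule
  have hq : HasDerivAt (fun t : ℝ => t / (1 - t)) (((1 - s) ^ 2)⁻¹) s := by
    have h := (hasDerivAt_id s).div ((hasDerivAt_const s (1:ℝ)).sub (hasDerivAt_id s))
      (by linarith : (1:ℝ) - s ≠ 0)
    refine h.congr_deriv ?_
    have h1s' : (1:ℝ) - s ≠ 0 := h1s.ne'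
    simp only [Pi.sub_apply, id]
    field_simp
    ring
  have hchain : HasDerivAt (fun t : ℝ => lamM V W (t / (1 - t)))
      ((∑ u, W u * φ u ^ 2) * ((1 - s) ^ 2)⁻¹) s := HasDerivAt.comp (h₂ := lamM V W) (h := fun t : ℝ => t / (1 - t)) s hD hq
  have hgderiv : HasDerivAt (fun t : ℝ => (V : ℝ) - lamMin (hG t) - 1)
      (-((∑ u, W u * φ u ^ 2) * ((1 - s) ^ 2)⁻¹)) s := by
    have h := (hchain.const_sub (V:ℝ)).sub_const 1
    exact h
  constructor
  · refine ⟨_, hgderiv, ?_⟩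
    have hsm : ∀ u ∈ Finset.univ.erase m, secondMin hV W m ≤ W u :=
      fun u hu => Finset.inf'_le W hu
    have hsum1 : ∑ u, W u * φ u ^ 2 = ∑ u ∈ Finset.univ.erase m, W u * φ u ^ 2 := by
      rw [← Finset.sum_erase_add Finset.univ _ (Finset.mem_univ m), hWm]
      ring
    have hsum2 : ∑ u ∈ Finset.univ.erase m, φ u ^ 2 = 1 - φ m ^ 2 := by
      have h : (∑ u ∈ Finset.univ.erase m, φ u ^ 2) + φ m ^ 2 = ∑ u : Fin V, φ u ^ 2 :=
        Finset.sum_erase_add _ _ (Finset.mem_univ m)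
      rw [hnorm] at h
      linarith
    have hge : secondMin hV W m * (1 - φ m ^ 2) ≤ ∑ u, W u * φ u ^ 2 := by
      rw [hsum1, ← hsum2, Finset.mul_sum]
      exact Finset.sum_le_sum fun u hu =>
        mul_le_mul_of_nonneg_right (hsm u hu) (sq_nonneg _)
    have hx : (0:ℝ) < (1 - s) ^ 2 := by positivity
    have hkey := mul_le_mul_of_nonneg_right (neg_le_neg hge) (inv_nonneg.mpr hx.le)
    have hrw : -(secondMin hV W m) * (1 - φ m ^ 2) / (1 - s) ^ 2
        = -(secondMin hV W m * (1 - φ m ^ 2)) * ((1 - s) ^ 2)⁻¹ := by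
      ring
    rw [hrw]
    nlinarith [hkey]
  · intro t ht t' ht' htt
    have h1t : (0:ℝ) < 1 - t := by linarith [ht.2]
    have h1t' : (0:ℝ) < 1 - t' := by linarith [ht'.2]
    have hqlt : t / (1 - t) < t' / (1 - t') := by
      rw [div_lt_div_iff₀ h1t h1t']
      nlinarith [ht.1, ht'.1]
    have hmono := lamM_strictMono hV hWm hmin hqlt
    have e1 : lamMin (hG t) = lamM V W (t / (1 - t)) := rfl
    have e2 : lamMin (hG t') = lamM V W (t' / (1 - t')) := rfl
    show (V:ℝ) - lamMin (hG t') - 1 < (V:ℝ) - lamMin (hG t) - 1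
    rw [e1, e2]
    linarith
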